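/- Suppose: N_{ab}^1 = δ_{b,ā} for all a, b; d : 𝒞 → ℝ satisfies d_a > 0, d_1 = 1 and d_{ā} = d_a for all a; 𝒟 = √(∑_a d_a²); and f : 𝒞 → 𝒞 → ℂ satisfies f_{ab} = f_{ba}, f_{ab} = conj(f_{āb}), f_{a1} = 1, the splitting relation ∑_c (N_{ab}^c d_c/(d_a d_b)) · f_{cx} = f_{ax} f_{bx} for all a, b, x, and the vacuum condition ∑_b (d_b²/𝒟²) f_{ab} = δ_{a,1} for all a. Define S_{ab} := (d_a d_b/𝒟) · f_{ab}. Then S is unitary (∑_x S_{ax} conj(S_{bx}) = δ_{a,b}) and the Verlinde formula holds: (N_{ab}^c : ℂ) = ∑_x S_{ax} S_{bx} S_{c̄x} / S_{1x} for all a, b, c. -/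

import Mathlib

/-- From the axioms of the paper (positive quantum dimensions with
`d 1 = 1` and `d (bar a) = d a`, `N a b 1 = δ_{b, bar a}`, total quantum
dimension `𝒟`, and `f` symmetric, conjugation-covariant, normalized, satisfying
the splitting relation and the vacuum condition), the matrix
`S a b = (d a * d b / 𝒟) * f a b` is unitary and satisfies the Verlinde formula. -/
theorem verlinde_stmt7 {𝒞 : Type*} [Fintype 𝒞] [DecidableEq 𝒞]
    (one : 𝒞) (bar : 𝒞 → 𝒞)
    (hbar_one : bar one = one) (hbar_invol : ∀ a, bar (bar a) = a)
    (N : 𝒞 → 𝒞 → 𝒞 → ℕ)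
    (hN_vac : ∀ a b, N a b one = if b = bar a then 1 else 0)
    (d : 𝒞 → ℝ) (hd_pos : ∀ a, 0 < d a) (hd_one : d one = 1)
    (hd_bar : ∀ a, d (bar a) = d a)
    (𝒟 : ℝ) (h𝒟 : 𝒟 = Real.sqrt (∑ a, d a ^ 2))
    (f : 𝒞 → 𝒞 → ℂ)
    (hf_sym : ∀ a b, f a b = f b a)
    (hf_conj : ∀ a b, f a b = (starRingEnd ℂ) (f (bar a) b))
    (hf_one : ∀ a, f a one = 1)
    (hsplit : ∀ a b x,
      ∑ c, (((N a b c : ℝ) * d c / (d a * d b) : ℝ) : ℂ) * f c x = f a x * f b x)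
    (hvac : ∀ a, ∑ b, ((d b ^ 2 / 𝒟 ^ 2 : ℝ) : ℂ) * f a b = if a = one then 1 else 0)
    (S : 𝒞 → 𝒞 → ℂ)
    (hS : ∀ a b, S a b = ((d a * d b / 𝒟 : ℝ) : ℂ) * f a b) :
    (∀ a b, ∑ x, S a x * (starRingEnd ℂ) (S b x) = if a = b then 1 else 0) ∧
    (∀ a b c, (N a b c : ℂ) = ∑ x, S a x * S b x * S (bar c) x / S one x) := by
  -- basic positivity / nonvanishing facts
  have hDpos : 0 < 𝒟 := by
    rw [h𝒟]
    exact Real.sqrt_pos.mpr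
      (Finset.sum_pos (fun i _ => pow_pos (hd_pos i) 2) ⟨one, Finset.mem_univ one⟩)
  have hDC : (𝒟 : ℂ) ≠ 0 := Complex.ofReal_ne_zero.mpr (ne_of_gt hDpos)
  have hdC : ∀ x, (d x : ℂ) ≠ 0 := fun x =>
    Complex.ofReal_ne_zero.mpr (ne_of_gt (hd_pos x))
  have hbarinj : ∀ x y, bar x = bar y → x = y := fun x y h => by
    rw [← hbar_invol x, h, hbar_invol]
  have hconj : ∀ a x, (starRingEnd ℂ) (f a x) = f (bar a) x := by
    intro a x
    rw [hf_conj (bar a) x, hbar_invol]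
  have hf_one' : ∀ x, f one x = 1 := fun x => (hf_sym one x).trans (hf_one x)
  -- key lemma: weighted sum of a product of two f's
  have key : ∀ p q, ∑ x, ((d x ^ 2 / 𝒟 ^ 2 : ℝ) : ℂ) * (f p x * f q x)
      = (((N p q one : ℝ) / (d p * d q) : ℝ) : ℂ) := by
    intro p q
    have h1 : ∀ x, ((d x ^ 2 / 𝒟 ^ 2 : ℝ) : ℂ) * (f p x * f q x)
        = ∑ c, (((N p q c : ℝ) * d c / (d p * d q) : ℝ) : ℂ) *
            (((d x ^ 2 / 𝒟 ^ 2 : ℝ) : ℂ) * f c x) := by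
      intro x
      rw [← hsplit p q x, Finset.mul_sum]
      exact Finset.sum_congr rfl fun c _ => by ring
    simp_rw [h1]
    rw [Finset.sum_comm]
    have h2 : ∀ c, ∑ x, (((N p q c : ℝ) * d c / (d p * d q) : ℝ) : ℂ) *
        (((d x ^ 2 / 𝒟 ^ 2 : ℝ) : ℂ) * f c x)
        = (((N p q c : ℝ) * d c / (d p * d q) : ℝ) : ℂ) * (if c = one then 1 else 0) := by
      intro c
      rw [← Finset.mul_sum, hvac c]
    simp_rw [h2]
    simp only [mul_ite, mul_one, mul_zero]
    rw [Finset.sum_ite_eq' Finset.univ one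
      (fun c => (((N p q c : ℝ) * d c / (d p * d q) : ℝ) : ℂ))]
    simp only [Finset.mem_univ, if_true, hd_one, mul_one]
  -- key lemma with three f's
  have key2 : ∀ p q g, ∑ x, ((d x ^ 2 / 𝒟 ^ 2 : ℝ) : ℂ) * (f p x * f q x * f g x)
      = ∑ e, (((N p q e : ℝ) * d e / (d p * d q) : ℝ) : ℂ) *
          (((N e g one : ℝ) / (d e * d g) : ℝ) : ℂ) := by
    intro p q g
    have h1 : ∀ x, ((d x ^ 2 / 𝒟 ^ 2 : ℝ) : ℂ) * (f p x * f q x * f g x)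
        = ∑ e, (((N p q e : ℝ) * d e / (d p * d q) : ℝ) : ℂ) *
            (((d x ^ 2 / 𝒟 ^ 2 : ℝ) : ℂ) * (f e x * f g x)) := by
      intro x
      calc ((d x ^ 2 / 𝒟 ^ 2 : ℝ) : ℂ) * (f p x * f q x * f g x)
          = ((d x ^ 2 / 𝒟 ^ 2 : ℝ) : ℂ) * ((f p x * f q x) * f g x) := by ring
        _ = ((d x ^ 2 / 𝒟 ^ 2 : ℝ) : ℂ) *
            ((∑ e, (((N p q e : ℝ) * d e / (d p * d q) : ℝ) : ℂ) * f e x) * f g x) := by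
            rw [hsplit]
        _ = _ := by
            rw [Finset.sum_mul, Finset.mul_sum]
            exact Finset.sum_congr rfl fun e _ => by ring
    simp_rw [h1]
    rw [Finset.sum_comm]
    exact Finset.sum_congr rfl fun e _ => by rw [← Finset.mul_sum, key e g]
  constructor
  · -- unitarity
    intro a b
    have h1 : ∀ x, S a x * (starRingEnd ℂ) (S b x)
        = ((d a * d b : ℝ) : ℂ) *
            (((d x ^ 2 / 𝒟 ^ 2 : ℝ) : ℂ) * (f a x * f (bar b) x)) := by
      intro x
      rw [hS, hS, map_mul, Complex.conj_ofReal, hconj]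
      push_cast
      field_simp
    simp_rw [h1]
    rw [← Finset.mul_sum, key a (bar b), hN_vac]
    by_cases h : a = b
    · subst h
      rw [if_pos rfl, if_pos rfl, hd_bar]
      push_cast
      have ha := hdC a
      field_simp
    · rw [if_neg (fun hh => h (hbarinj _ _ hh).symm), if_neg h]
      push_cast
      simp
  · -- Verlinde formula
    intro a b c
    have h1 : ∀ x, S a x * S b x * S (bar c) x / S one x
        = ((d a * d b * d (bar c) : ℝ) : ℂ) *
            (((d x ^ 2 / 𝒟 ^ 2 : ℝ) : ℂ) * (f a x * f b x * f (bar c) x)) := by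
      intro x
      rw [hS, hS, hS, hS, hf_one' x, hd_one]
      push_cast
      have hx := hdC x
      field_simp
    simp_rw [h1]
    rw [← Finset.mul_sum, key2 a b (bar c)]
    have hterm : ∀ e, (((N a b e : ℝ) * d e / (d a * d b) : ℝ) : ℂ) *
        (((N e (bar c) one : ℝ) / (d e * d (bar c)) : ℝ) : ℂ)
        = if e = c then ((N a b c : ℂ) / ((d a * d b * d (bar c) : ℝ) : ℂ)) else 0 := by
      intro e
      rw [hN_vac]
      by_cases h : e = c
      · subst h
        rw [if_pos rfl, if_pos rfl]
        push_cast
        have he := hdC e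
        have ha := hdC a
        have hb := hdC b
        have hc := hdC (bar e)
        field_simp
      · rw [if_neg (fun hh => h (hbarinj _ _ hh).symm), if_neg h]
        push_cast
        simp
    simp_rw [hterm]
    rw [Finset.sum_ite_eq' Finset.univ c
      (fun _ => (N a b c : ℂ) / ((d a * d b * d (bar c) : ℝ) : ℂ))]
    simp only [Finset.mem_univ, if_true]
    rw [mul_div_cancel₀]
    push_cast
    exact mul_ne_zero (mul_ne_zero (hdC a) (hdC b)) (hdC (bar c))
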